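/- Let N ≥ 1 and let A and B be N × N matrices with rational entries, and let H = (A B) be the N × 2N matrix obtained by juxtaposing them. Then the following are equivalent: (i) A·Bᵗ is symmetric and H has rank N; (ii) there exist N × N rational matrices C and D such that the 2N × 2N block matrix with rows (A B) and (C D) belongs to the symplectic group Sp_{2N}(ℚ). -/

import Mathlib

open Matrix

theorem rank_eq_card_isUnit {n R : Type*} [Fintype n] [DecidableEq n] [Field R]
    (M : Matrix n n R) (h : M.rank = Fintype.card n) : IsUnit M := by
  rw [Matrix.isUnit_iff_isUnit_det, isUnit_iff_ne_zero]
  intro hdet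
  obtain ⟨v, hv, hMv⟩ := (Matrix.exists_mulVec_eq_zero_iff).mpr hdet
  have hker : v ∈ LinearMap.ker M.mulVecLin := by simpa using hMv
  have h1 : 1 ≤ Module.finrank R (LinearMap.ker M.mulVecLin) :=
    Submodule.one_le_finrank_iff.mpr (fun hbot => hv (by simpa [hbot] using hker))
  have hrn := LinearMap.finrank_range_add_finrank_ker M.mulVecLin
  rw [Matrix.rank] at h
  rw [h, Module.finrank_pi] at hrn
  omega

theorem half_symplectic_iff_symm_and_rank (N : ℕ) (hN : 1 ≤ N)
    (A B : Matrix (Fin N) (Fin N) ℚ) :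
    ((A * Bᵀ).IsSymm ∧ (Matrix.fromCols A B).rank = N) ↔
      ∃ C D : Matrix (Fin N) (Fin N) ℚ,
        Matrix.fromBlocks A B C D ∈ Matrix.symplecticGroup (Fin N) ℚ := by
  constructor
  · rintro ⟨hsymm, hrank⟩
    set E := A * Aᵀ + B * Bᵀ with hEdef
    have hBA : B * Aᵀ = A * Bᵀ := by
      have := hsymm.eq
      rwa [transpose_mul, transpose_transpose] at this
    have hE : fromCols A B * (fromCols A B)ᵀ = E := by
      rw [transpose_fromCols, fromCols_mul_fromRows]
    have hrankE : E.rank = Fintype.card (Fin N) := by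
      rw [← hE, rank_self_mul_transpose, hrank, Fintype.card_fin]
    have hU : IsUnit E := rank_eq_card_isUnit E hrankE
    have hUdet : IsUnit E.det := (Matrix.isUnit_iff_isUnit_det E).mp hU
    have hEsymm : Eᵀ = E := by
      rw [hEdef, transpose_add, transpose_mul, transpose_mul, transpose_transpose,
        transpose_transpose]
    have hinvsymm : E⁻¹ᵀ = E⁻¹ := by
      rw [Matrix.transpose_nonsing_inv, hEsymm]
    have hEinv : E * E⁻¹ = 1 := Matrix.mul_nonsing_inv E hUdet
    have hEinv' : E⁻¹ * E = 1 := Matrix.nonsing_inv_mul E hUdet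
    refine ⟨-(E⁻¹ * B), E⁻¹ * A, ?_⟩
    rw [SymplecticGroup.mem_iff, Matrix.J]
    rw [fromBlocks_multiply, fromBlocks_transpose, fromBlocks_multiply]
    rw [fromBlocks_inj]
    refine ⟨?_, ?_, ?_, ?_⟩
    · simp [hBA]
    · simp only [Matrix.mul_zero, Matrix.mul_one, Matrix.mul_neg, Matrix.neg_mul,
        transpose_neg, transpose_mul, hinvsymm, zero_add, add_zero, neg_neg]
      have key : B * (Bᵀ * E⁻¹) + A * (Aᵀ * E⁻¹) = 1 := by
        rw [← Matrix.mul_assoc, ← Matrix.mul_assoc, ← Matrix.add_mul, add_comm, ← hEdef, hEinv]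
      rw [← neg_add, key]
    · simp only [Matrix.mul_zero, Matrix.mul_one, Matrix.mul_neg, Matrix.neg_mul,
        transpose_neg, transpose_mul, hinvsymm, zero_add, add_zero, neg_neg]
      have key : E⁻¹ * A * Aᵀ + E⁻¹ * B * Bᵀ = 1 := by
        rw [Matrix.mul_assoc, Matrix.mul_assoc, ← Matrix.mul_add, ← hEdef, hEinv']
      exact key
    · simp only [Matrix.mul_zero, Matrix.mul_one, Matrix.mul_neg, Matrix.neg_mul,
        transpose_neg, transpose_mul, hinvsymm, zero_add, add_zero, neg_neg]
      have key : E⁻¹ * B * (Aᵀ * E⁻¹) = E⁻¹ * A * (Bᵀ * E⁻¹) := by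
        simp only [← Matrix.mul_assoc]
        rw [Matrix.mul_assoc E⁻¹ B Aᵀ, hBA, ← Matrix.mul_assoc]
      rw [key, neg_add_cancel]
  · rintro ⟨C, D, hmem⟩
    rw [SymplecticGroup.mem_iff, Matrix.J, fromBlocks_multiply, fromBlocks_transpose,
      fromBlocks_multiply, fromBlocks_inj] at hmem
    obtain ⟨h11, h12, h21, h22⟩ := hmem
    simp only [Matrix.mul_zero, Matrix.mul_one, Matrix.mul_neg, Matrix.neg_mul,
      zero_add, add_zero] at h11 h21
    constructor
    · rw [Matrix.IsSymm, transpose_mul, transpose_transpose]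
      exact add_neg_eq_zero.mp h11
    · have h21' : D * Aᵀ - C * Bᵀ = 1 := by rw [sub_eq_add_neg]; exact h21
      have ht : A * Dᵀ - B * Cᵀ = 1 := by
        have := congrArg Matrix.transpose h21'
        simpa [transpose_sub, transpose_mul] using this
      have hprod : fromCols A B * fromRows Dᵀ (-Cᵀ) = 1 := by
        rw [fromCols_mul_fromRows, Matrix.mul_neg, ← sub_eq_add_neg, ht]
      refine le_antisymm ?_ ?_
      · simpa using (fromCols A B).rank_le_card_height
      · calc N = (1 : Matrix (Fin N) (Fin N) ℚ).rank := by
                  rw [Matrix.rank_one, Fintype.card_fin]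
          _ = (fromCols A B * fromRows Dᵀ (-Cᵀ)).rank := by rw [hprod]
          _ ≤ (fromCols A B).rank := Matrix.rank_mul_le_left _ _
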